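/- Let G be a group and let {E_γ}_{γ∈Γ} be a finite family of pairwise disjoint finite subsets of G. Then for any finite K ⊆ G, each element of G belongs to ∂_K E_γ for at most |K| many indices γ; consequently, ∑_{γ∈Γ} |∂_K E_γ| ≤ |K| · |⋃_{γ∈Γ} ∂_K E_γ|. -/
import Mathlib


/-- The `K`-boundary of a subset `F` of a group `G`. -/
def kBoundary {G : Type*} [Group G] (K F : Set G) : Set G :=
  {t | (∃ k ∈ K, k * t ∈ F) ∧ (∃ k ∈ K, k * t ∉ F)}

/-- For a finite family of pairwise disjoint finite subsets `E γ` of a group `G` and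
finite `K ⊆ G`: each element of `G` lies in `∂_K E_γ` for at most `|K|` indices `γ`,
and consequently `∑_γ |∂_K E_γ| ≤ |K| · |⋃_γ ∂_K E_γ|`. -/
theorem sum_boundary_le_card_mul {G : Type*} [Group G] {Γ : Type*} [Fintype Γ]
    (K : Set G) (hK : K.Finite) (E : Γ → Set G) (hE : ∀ γ, (E γ).Finite)
    (hdisj : Pairwise fun γ₁ γ₂ => Disjoint (E γ₁) (E γ₂)) :
    (∀ t : G, ({γ : Γ | t ∈ kBoundary K (E γ)}).ncard ≤ K.ncard) ∧
      ∑ γ : Γ, (kBoundary K (E γ)).ncard ≤ K.ncard * (⋃ γ, kBoundary K (E γ)).ncard := by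
  classical
  set B := fun γ => kBoundary K (E γ) with hB
  have hBfin : ∀ γ, (B γ).Finite := by
    intro γ
    apply Set.Finite.subset (hK.inv.mul (hE γ))
    rintro t ⟨⟨k, hk, hkt⟩, -⟩
    exact ⟨k⁻¹, Set.inv_mem_inv.2 hk, k * t, hkt, by group⟩
  have hmain : ∀ t : G, ({γ : Γ | t ∈ B γ}).ncard ≤ K.ncard := by
    intro t
    set f : Γ → G := fun γ => if h : t ∈ B γ then h.1.choose else 1 with hf
    apply Set.ncard_le_ncard_of_injOn f _ _ hK
    · intro γ hγ
      simp only [Set.mem_setOf_eq] at hγ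
      simp only [hf, dif_pos hγ]
      exact hγ.1.choose_spec.1
    · intro γ₁ h₁ γ₂ h₂ hfe
      simp only [Set.mem_setOf_eq] at h₁ h₂
      by_contra hne
      simp only [hf, dif_pos h₁, dif_pos h₂] at hfe
      have m1 := h₁.1.choose_spec.2
      have m2 := h₂.1.choose_spec.2
      rw [hfe] at m1
      exact (hdisj hne).le_bot ⟨m1, m2⟩
  refine ⟨hmain, ?_⟩
  have hUfin : (⋃ γ, B γ).Finite := Set.finite_iUnion hBfin
  set T := hUfin.toFinset with hT
  have hfilter : ∀ γ, (hBfin γ).toFinset = T.filter (· ∈ B γ) := by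
    intro γ
    ext x
    simp only [Set.Finite.mem_toFinset, Finset.mem_filter, hT, Set.mem_iUnion]
    exact ⟨fun h => ⟨⟨γ, h⟩, h⟩, fun h => h.2⟩
  calc ∑ γ, (B γ).ncard = ∑ γ, ((hBfin γ).toFinset).card := by
        exact Finset.sum_congr rfl fun γ _ => Set.ncard_eq_toFinset_card _ (hBfin γ)
    _ = ∑ γ, ∑ t ∈ T, (if t ∈ B γ then 1 else 0) := by
        refine Finset.sum_congr rfl fun γ _ => ?_
        rw [hfilter γ, Finset.card_filter]
    _ = ∑ t ∈ T, ∑ γ, (if t ∈ B γ then 1 else 0) := Finset.sum_comm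
    _ = ∑ t ∈ T, ({γ : Γ | t ∈ B γ}).ncard := by
        refine Finset.sum_congr rfl fun t _ => ?_
        have : {γ : Γ | t ∈ B γ} = ↑(Finset.univ.filter fun γ => t ∈ B γ) := by
          ext γ; simp
        rw [this, Set.ncard_coe_finset, Finset.card_filter]
    _ ≤ ∑ _t ∈ T, K.ncard := Finset.sum_le_sum fun t _ => hmain t
    _ = T.card * K.ncard := by rw [Finset.sum_const, smul_eq_mul]
    _ = K.ncard * (⋃ γ, B γ).ncard := by
        rw [Set.ncard_eq_toFinset_card _ hUfin, Nat.mul_comm]
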